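/- Let n ≥ 1, let m ≥ 1, and let j₁, …, j_m : ℝⁿ → ℝ be smooth functions with ∑_{i=1}^m j_i(x)² = 1 for all x ∈ ℝⁿ. Then for every smooth φ : ℝⁿ → ℂ and every x ∈ ℝⁿ, ∑_{i=1}^m j_i(x)·Δ(j_i φ)(x) = Δφ(x) − (∑_{i=1}^m ‖∇j_i(x)‖²)·φ(x). (This is the IMS localization formula −Δ = ∑_i j_i(−Δ)j_i − ∑_i |∇j_i|² at the pointwise level.) -/

import Mathlib

open MeasureTheory

section aux
variable {E : Type*} [NormedAddCommGroup E] [NormedSpace ℝ E]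

lemma contDiff_fderiv_apply {F : Type*} [NormedAddCommGroup F] [NormedSpace ℝ F]
    {f : E → F} (hf : ContDiff ℝ (⊤:ℕ∞) f) (v : E) :
    ContDiff ℝ (⊤:ℕ∞) (fun y => fderiv ℝ f y v) :=
  (hf.fderiv_right (le_refl _)).clm_apply contDiff_const

lemma d1_smul (f : E → ℝ) (hf : ContDiff ℝ (⊤:ℕ∞) f) (φ : E → ℂ)
    (hφ : ContDiff ℝ (⊤:ℕ∞) φ) (v : E) :
    (fun y => fderiv ℝ (fun z => f z • φ z) y v)
      = fun y => f y • fderiv ℝ φ y v + (fderiv ℝ f y v) • φ y := by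
  funext y
  rw [fderiv_fun_smul ((hf.differentiable (by simp)) y)
    ((hφ.differentiable (by simp)) y)]
  simp

lemma d2_smul (f : E → ℝ) (hf : ContDiff ℝ (⊤:ℕ∞) f) (φ : E → ℂ)
    (hφ : ContDiff ℝ (⊤:ℕ∞) φ) (v : E) (x : E) :
    fderiv ℝ (fun y => fderiv ℝ (fun z => f z • φ z) y v) x v
      = f x • fderiv ℝ (fun y => fderiv ℝ φ y v) x v
        + (fderiv ℝ f x v • fderiv ℝ φ x v + fderiv ℝ f x v • fderiv ℝ φ x v)
        + fderiv ℝ (fun y => fderiv ℝ f y v) x v • φ x := by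
  rw [d1_smul f hf φ hφ v]
  have hdf := (hf.differentiable (by simp))
  have hdφ := (hφ.differentiable (by simp))
  have hdf' := ((contDiff_fderiv_apply hf v).differentiable (by simp))
  have hdφ' := ((contDiff_fderiv_apply hφ v).differentiable (by simp))
  rw [fderiv_fun_add (f := fun y => f y • fderiv ℝ φ y v) (g := fun y => fderiv ℝ f y v • φ y) ((hdf x).smul (hdφ' x)) ((hdf' x).smul (hdφ x))]
  rw [ContinuousLinearMap.add_apply,
    fderiv_fun_smul (hdf x) (hdφ' x), fderiv_fun_smul (hdf' x) (hdφ x)]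
  simp
  ring
end aux

/-- The Laplacian of a function `u : ℝⁿ → ℂ` at a point `x`. -/
noncomputable def lap {n : ℕ} (u : EuclideanSpace ℝ (Fin n) → ℂ)
    (x : EuclideanSpace ℝ (Fin n)) : ℂ :=
  ∑ i, fderiv ℝ (fun y => fderiv ℝ u y (EuclideanSpace.single i 1)) x
    (EuclideanSpace.single i 1)

/-- The gradient of a real-valued function `f : ℝⁿ → ℝ` at a point `x`. -/
noncomputable def gradR {n : ℕ} (f : EuclideanSpace ℝ (Fin n) → ℝ)
    (x : EuclideanSpace ℝ (Fin n)) : EuclideanSpace ℝ (Fin n) :=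
  (WithLp.equiv 2 (Fin n → ℝ)).symm fun i => fderiv ℝ f x (EuclideanSpace.single i 1)

/-- IMS localization formula: if `∑ i, jᵢ² ≡ 1`, then
`∑ i, jᵢ Δ(jᵢ φ) = Δφ − (∑ i, ‖∇jᵢ‖²) φ` pointwise. -/
theorem IMS_localization {n m : ℕ} (hn : 1 ≤ n) (hm : 1 ≤ m)
    (j : Fin m → EuclideanSpace ℝ (Fin n) → ℝ)
    (hj : ∀ i, ContDiff ℝ (⊤ : ℕ∞) (j i))
    (hsum : ∀ x, ∑ i, (j i x) ^ 2 = 1)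
    (φ : EuclideanSpace ℝ (Fin n) → ℂ) (hφ : ContDiff ℝ (⊤ : ℕ∞) φ)
    (x : EuclideanSpace ℝ (Fin n)) :
    ∑ i, (j i x : ℂ) * lap (fun y => (j i y : ℂ) * φ y) x
      = lap φ x - ((∑ i, ‖gradR (j i) x‖ ^ 2 : ℝ) : ℂ) * φ x := by
  classical
  set e : Fin n → EuclideanSpace ℝ (Fin n) := fun k => EuclideanSpace.single k 1 with he
  have hdj : ∀ i, Differentiable ℝ (j i) := fun i =>
    (hj i).differentiable (by simp)
  have hdj' : ∀ i (v : EuclideanSpace ℝ (Fin n)),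
      Differentiable ℝ (fun y => fderiv ℝ (j i) y v) := fun i v =>
    (contDiff_fderiv_apply (hj i) v).differentiable (by simp)
  -- first consequence of ∑ j² = 1
  have h1 : ∀ (v : EuclideanSpace ℝ (Fin n)) y, ∑ i, j i y * fderiv ℝ (j i) y v = 0 := by
    intro v y
    have hS : (fun z : EuclideanSpace ℝ (Fin n) => ∑ i, (j i z) ^ 2) = fun _ => (1:ℝ) :=
      funext hsum
    have h0 : fderiv ℝ (fun z : EuclideanSpace ℝ (Fin n) => ∑ i, (j i z) ^ 2) y v = 0 := by
      rw [hS]; simp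
    rw [fderiv_fun_sum (A := fun i z => (j i z) ^ 2) (fun i _ => (hdj i y).pow 2)] at h0
    simp only [ContinuousLinearMap.sum_apply] at h0
    have heq : ∀ i : Fin m, fderiv ℝ (fun z => (j i z) ^ 2) y v
        = 2 * (j i y * fderiv ℝ (j i) y v) := by
      intro i
      have hsq : (fun z : EuclideanSpace ℝ (Fin n) => (j i z) ^ 2)
          = fun z => j i z * j i z := by funext z; ring
      rw [hsq, fderiv_fun_mul (hdj i y) (hdj i y)]
      simp
      ring
    rw [Finset.sum_congr rfl (fun i _ => heq i), ← Finset.mul_sum] at h0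
    linarith
  -- second consequence
  have h2 : ∀ (v : EuclideanSpace ℝ (Fin n)),
      ∑ i, (fderiv ℝ (j i) x v * fderiv ℝ (j i) x v
        + j i x * fderiv ℝ (fun y => fderiv ℝ (j i) y v) x v) = 0 := by
    intro v
    have hzero : (fun y => ∑ i, j i y * fderiv ℝ (j i) y v)
        = fun _ : EuclideanSpace ℝ (Fin n) => (0:ℝ) := funext (h1 v)
    have h0 : fderiv ℝ (fun y => ∑ i, j i y * fderiv ℝ (j i) y v) x v = 0 := by
      rw [hzero]; simp
    rw [fderiv_fun_sum (A := fun i y => j i y * fderiv ℝ (j i) y v) (fun i _ => (hdj i x).mul (hdj' i v x))] at h0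
    simp only [ContinuousLinearMap.sum_apply] at h0
    have heq : ∀ i : Fin m, fderiv ℝ (fun y => j i y * fderiv ℝ (j i) y v) x v
        = fderiv ℝ (j i) x v * fderiv ℝ (j i) x v
          + j i x * fderiv ℝ (fun y => fderiv ℝ (j i) y v) x v := by
      intro i
      rw [fderiv_fun_mul (hdj i x) (hdj' i v x)]
      simp
      ring
    rw [Finset.sum_congr rfl (fun i _ => heq i)] at h0
    exact h0
  -- replace coercion-products with smul
  simp only [← Complex.real_smul]
  -- expand the laplacians of jᵢ • φ
  have hlap : ∀ i : Fin m, lap (fun y => j i y • φ y) x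
      = ∑ k, (j i x • fderiv ℝ (fun y => fderiv ℝ φ y (e k)) x (e k)
          + (fderiv ℝ (j i) x (e k) • fderiv ℝ φ x (e k)
             + fderiv ℝ (j i) x (e k) • fderiv ℝ φ x (e k))
          + fderiv ℝ (fun y => fderiv ℝ (j i) y (e k)) x (e k) • φ x) := by
    intro i
    exact Finset.sum_congr rfl fun k _ => d2_smul (j i) (hj i) φ hφ (e k) x
  rw [Finset.sum_congr rfl fun i _ => by rw [hlap i]]
  -- push jᵢ x • inside and swap sums
  simp only [Finset.smul_sum]
  rw [Finset.sum_comm]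
  have key : ∀ k : Fin n,
      ∑ i, j i x • (j i x • fderiv ℝ (fun y => fderiv ℝ φ y (e k)) x (e k)
          + (fderiv ℝ (j i) x (e k) • fderiv ℝ φ x (e k)
             + fderiv ℝ (j i) x (e k) • fderiv ℝ φ x (e k))
          + fderiv ℝ (fun y => fderiv ℝ (j i) y (e k)) x (e k) • φ x)
      = fderiv ℝ (fun y => fderiv ℝ φ y (e k)) x (e k)
        - (∑ i, (fderiv ℝ (j i) x (e k)) ^ 2) • φ x := by
    intro k
    have hs : ∑ i, j i x * j i x = 1 := by
      rw [← hsum x]; exact Finset.sum_congr rfl fun i _ => (sq (j i x)).symm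
    have h1' := h1 (e k) x
    have h2' := h2 (e k)
    have h3 : ∑ i, j i x * fderiv ℝ (fun y => fderiv ℝ (j i) y (e k)) x (e k)
        = -∑ i, (fderiv ℝ (j i) x (e k)) ^ 2 := by
      rw [Finset.sum_add_distrib] at h2'
      have : ∑ i, fderiv ℝ (j i) x (e k) * fderiv ℝ (j i) x (e k)
          = ∑ i, (fderiv ℝ (j i) x (e k)) ^ 2 :=
        Finset.sum_congr rfl fun i _ => (sq _).symm
      linarith
    simp only [smul_add, smul_smul]
    rw [Finset.sum_add_distrib, Finset.sum_add_distrib, Finset.sum_add_distrib,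
      ← Finset.sum_smul, ← Finset.sum_smul, ← Finset.sum_smul,
      hs, h1', h3]
    simp [sub_eq_add_neg]
  rw [Finset.sum_congr rfl fun k _ => key k]
  rw [Finset.sum_sub_distrib, ← Finset.sum_smul]
  have hnorm : ∑ i, ‖gradR (j i) x‖ ^ 2 = ∑ k, ∑ i, (fderiv ℝ (j i) x (e k)) ^ 2 := by
    rw [Finset.sum_comm]
    refine Finset.sum_congr rfl fun i _ => ?_
    rw [EuclideanSpace.norm_eq, Real.sq_sqrt (by positivity)]
    refine Finset.sum_congr rfl fun k _ => ?_
    simp [gradR, sq_abs, he]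
  rw [lap, hnorm]
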